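/- arXiv:1904.08037 — 2 statements merged into one kernel-verified Lean document; each statement's English description precedes it below -/
import Mathlib

section
/- Let G be a finite simple graph with vertex set V, let a ≥ 1 and b ≥ 1 be integers, and let V_D' ⊆ V be such that every v ∈ V_D' satisfies |E(N^{100ab}(v))| ≤ 2b·|E(N^a(v))|. Let W_0 := {u ∈ V : dist_G(u, V_D') ≤ a} and let S be the vertex set of a connected component of G[W_0]. Then S satisfies the invariant H: (H1) for each u ∈ V_D', either N^a(u) ⊆ S or N^a(u) ∩ S = ∅; (H2) D_S ≤ 10a·N_S − (4a+1); (H3) N_S ≤ 2b. -/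
open Finset

/-- The subgraph of `G` induced by the vertex set `S`, viewed as a graph on all of `V`
(vertices outside `S` are isolated). Distances between vertices of `S` in this graph agree
with distances in the induced subgraph `G[S]`. -/
def SimpleGraph.restrictS {V : Type*} (G : SimpleGraph V) (S : Set V) : SimpleGraph V where
  Adj u v := u ∈ S ∧ v ∈ S ∧ G.Adj u v
  symm := ⟨fun _ _ ⟨hu, hv, h⟩ => ⟨hv, hu, h.symm⟩⟩
  loopless := ⟨fun u ⟨_, _, h⟩ => G.loopless.irrefl u h⟩

namespace InvariantAux

open SimpleGraph

variable {V : Type*}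

lemma restrictS_le (G : SimpleGraph V) (A : Set V) : G.restrictS A ≤ G :=
  fun _ _ h => h.2.2

lemma edist_le_restrict (G : SimpleGraph V) (A : Set V) (u v : V) :
    G.edist u v ≤ (G.restrictS A).edist u v :=
  SimpleGraph.edist_anti (restrictS_le G A)

lemma exists_restrict_walk {G : SimpleGraph V} {A : Set V} :
    ∀ {x y : V} (p : G.Walk x y), (∀ v ∈ p.support, v ∈ A) →
      ∃ q : (G.restrictS A).Walk x y, q.length = p.length
  | _, _, .nil, _ => ⟨.nil, rfl⟩
  | _, _, .cons h p, hs => by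
      obtain ⟨q, hq⟩ := exists_restrict_walk p (fun v hv => hs v (by simp [hv]))
      exact ⟨.cons ⟨hs _ (by simp), hs _ (by simp [Walk.start_mem_support]), h⟩ q,
        by exact congrArg (· + 1) hq⟩

lemma restrict_support {G : SimpleGraph V} {A : Set V} :
    ∀ {x y : V} (p : (G.restrictS A).Walk x y), x ∈ A → ∀ v ∈ p.support, v ∈ A
  | _, _, .nil, hx => by simp [hx]
  | _, _, .cons h p, hx => by
      intro v hv
      rw [Walk.support_cons, List.mem_cons] at hv
      rcases hv with rfl | hv
      · exact hx
      · exact restrict_support p h.2.1 v hv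

lemma support_reachable {G : SimpleGraph V} :
    ∀ {x y : V} (p : G.Walk x y), ∀ v ∈ p.support, G.Reachable x v
  | _, _, .nil => by
      intro v hv
      rw [Walk.support_nil, List.mem_singleton] at hv
      subst hv; exact Reachable.refl _
  | _, _, .cons h p => by
      intro v hv
      rw [Walk.support_cons, List.mem_cons] at hv
      rcases hv with rfl | hv
      · exact Reachable.refl _
      · exact (h.reachable).trans (support_reachable p v hv)

lemma edist_getVert_left {G : SimpleGraph V} :
    ∀ {x y : V} (p : G.Walk x y) (i : ℕ), G.edist x (p.getVert i) ≤ (i : ℕ∞)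
  | _, _, .nil, i => by
      rw [Walk.getVert_of_length_le _ (by simp)]
      simp [SimpleGraph.edist_self]
  | _, _, .cons h p, 0 => by
      rw [Walk.getVert_zero]
      simp [SimpleGraph.edist_self]
  | _, _, .cons h p, (i+1) => by
      rw [Walk.getVert_cons_succ]
      calc G.edist _ _ ≤ G.edist _ _ + G.edist _ (p.getVert i) := SimpleGraph.edist_triangle
      _ ≤ 1 + (i : ℕ∞) :=
        add_le_add (le_of_eq (SimpleGraph.edist_eq_one_iff_adj.mpr h)) (edist_getVert_left p i)
      _ = ((i+1 : ℕ) : ℕ∞) := by push_cast; ring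

lemma edist_getVert_right {G : SimpleGraph V} :
    ∀ {x y : V} (p : G.Walk x y) (i : ℕ), G.edist (p.getVert i) y ≤ ((p.length - i : ℕ) : ℕ∞)
  | _, _, .nil, i => by
      rw [Walk.getVert_of_length_le _ (by simp)]
      simp [SimpleGraph.edist_self]
  | _, _, .cons h p, 0 => by
      rw [Walk.getVert_zero]
      refine (SimpleGraph.edist_le (Walk.cons h p)).trans ?_
      simp
  | _, _, .cons h p, (i+1) => by
      rw [Walk.getVert_cons_succ]
      have := edist_getVert_right p i
      simpa [Nat.succ_sub_succ] using this

end InvariantAux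

/-- `N_S`: the maximum size of a subset `T ⊆ S ∩ V_D'` whose elements are pairwise at
`G`-distance greater than `2a`. -/
noncomputable def packing {V : Type*} [Fintype V] (G : SimpleGraph V) (VD : Set V)
    (a : ℕ) (S : Set V) : ℕ :=
  sSup {n | ∃ T : Finset V, ↑T ⊆ S ∩ VD ∧ T.card = n ∧
    ∀ u ∈ T, ∀ v ∈ T, u ≠ v → ((2 * a : ℕ) : ℕ∞) < G.edist u v}

/-- `D_S`: the diameter of the induced subgraph `G[S]`. -/
noncomputable def setDiam {V : Type*} (G : SimpleGraph V) (S : Set V) : ℕ∞ :=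
  ⨆ u ∈ S, ⨆ v ∈ S, (G.restrictS S).edist u v

/-- `E(S)`: the set of edges of `G` with both endpoints in `S`. -/
def edgesIn {V : Type*} [Fintype V] [DecidableEq V] (G : SimpleGraph V) [DecidableRel G.Adj]
    (S : Finset V) : Finset (Sym2 V) :=
  ((S ×ˢ S).filter fun p => G.Adj p.1 p.2).image fun p => s(p.1, p.2)

open InvariantAux SimpleGraph

/-- Lemma B.7, base case of the invariant `H`. Let `a, b ≥ 1` and let
`V_D' ⊆ V` be such that every `v ∈ V_D'` satisfies `|E(N^{100ab}(v))| ≤ 2b·|E(N^a(v))|`.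
Let `W₀ := {u : dist_G(u, V_D') ≤ a}` and let `S` be the vertex set of a connected component
of `G[W₀]`. Then `S` satisfies the invariant `H`:
(H1) for each `u ∈ V_D'`, either `N^a(u) ⊆ S` or `N^a(u) ∩ S = ∅`;
(H2) `D_S ≤ 10a·N_S − (4a+1)`, i.e. `D_S + (4a+1) ≤ 10a·N_S`;
(H3) `N_S ≤ 2b`. -/
theorem invariant_H_base_case
    {V : Type*} [Fintype V] [DecidableEq V] (G : SimpleGraph V) [DecidableRel G.Adj]
    (a b : ℕ) (ha : 1 ≤ a) (hb : 1 ≤ b) (VD : Set V)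
    (ball : V → ℕ → Finset V)
    (hball : ∀ v r x, x ∈ ball v r ↔ G.edist v x ≤ (r : ℕ∞))
    (hVD : ∀ v ∈ VD,
      (edgesIn G (ball v (100 * a * b))).card ≤ 2 * b * (edgesIn G (ball v a)).card)
    (W₀ : Set V) (hW₀ : W₀ = {u | ∃ w ∈ VD, G.edist u w ≤ (a : ℕ∞)})
    (s₀ : V) (hs₀ : s₀ ∈ W₀)
    (S : Set V) (hS : S = {v | v ∈ W₀ ∧ (G.restrictS W₀).Reachable s₀ v}) :
    (∀ u ∈ VD, (↑(ball u a) : Set V) ⊆ S ∨ (↑(ball u a) : Set V) ∩ S = ∅) ∧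
    setDiam G S + ((4 * a + 1 : ℕ) : ℕ∞) ≤ ((10 * a * packing G VD a S : ℕ) : ℕ∞) ∧
    packing G VD a S ≤ 2 * b := by
  have hmemW : ∀ u : V, u ∈ W₀ ↔ ∃ w ∈ VD, G.edist u w ≤ (a : ℕ∞) := by
    intro u; rw [hW₀]; exact Iff.rfl
  have hmemS : ∀ v : V, v ∈ S ↔ v ∈ W₀ ∧ (G.restrictS W₀).Reachable s₀ v := by
    intro v; rw [hS]; exact Iff.rfl
  have hballW : ∀ u ∈ VD, ∀ z ∈ ball u a, z ∈ W₀ := fun u hu z hz =>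
    (hmemW z).mpr ⟨u, hu, by rw [SimpleGraph.edist_comm]; exact (hball u a z).mp hz⟩
  have hball_reach : ∀ u ∈ VD, ∀ z ∈ ball u a, (G.restrictS W₀).Reachable u z := by
    intro u hu z hz
    have hz' : G.edist u z ≤ (a : ℕ∞) := (hball u a z).mp hz
    have hne : G.edist u z ≠ ⊤ := (hz'.trans_lt (ENat.coe_lt_top a)).ne
    obtain ⟨p, hp⟩ := SimpleGraph.exists_walk_of_edist_ne_top hne
    have hsup : ∀ v ∈ p.support, v ∈ W₀ := by
      intro v hv
      obtain ⟨i, rfl, hi⟩ := Walk.mem_support_iff_exists_getVert.mp hv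
      refine (hmemW _).mpr ⟨u, hu, ?_⟩
      rw [SimpleGraph.edist_comm]
      calc G.edist u (p.getVert i) ≤ (i : ℕ∞) := edist_getVert_left p i
      _ ≤ (p.length : ℕ∞) := by exact_mod_cast hi
      _ ≤ (a : ℕ∞) := hp ▸ hz'
    obtain ⟨q, _⟩ := exists_restrict_walk p hsup
    exact q.reachable
  have H1 : ∀ u ∈ VD, (↑(ball u a) : Set V) ⊆ S ∨ (↑(ball u a) : Set V) ∩ S = ∅ := by
    intro u hu
    by_cases hcap : (↑(ball u a) : Set V) ∩ S = ∅
    · exact Or.inr hcap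
    · left
      obtain ⟨x, hx1, hx2⟩ := Set.nonempty_iff_ne_empty.mpr hcap
      intro z hz
      have hzball : z ∈ ball u a := hz
      refine (hmemS z).mpr ⟨hballW u hu z hzball, ?_⟩
      have h1 : (G.restrictS W₀).Reachable s₀ x := ((hmemS x).mp hx2).2
      have h2 := hball_reach u hu x hx1
      have h3 := hball_reach u hu z hzball
      exact (h1.trans h2.symm).trans h3
  have hSsubW : S ⊆ W₀ := fun v hv => ((hmemS v).mp hv).1
  have hs₀S : s₀ ∈ S := (hmemS s₀).mpr ⟨hs₀, Reachable.refl s₀⟩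
  have hreachW : ∀ x ∈ S, ∀ y ∈ S, (G.restrictS W₀).Reachable x y := fun x hx y hy =>
    (((hmemS x).mp hx).2.symm).trans ((hmemS y).mp hy).2
  have hmono : (G.restrictS W₀).restrictS S ≤ G.restrictS S :=
    fun u v h => ⟨h.1, h.2.1, h.2.2.2.2⟩
  have hmono2 : G.restrictS S ≤ G.restrictS W₀ :=
    fun u v h => ⟨hSsubW h.1, hSsubW h.2.1, h.2.2⟩
  have hliftW : ∀ {x y : V}, x ∈ S → ∀ (p : (G.restrictS W₀).Walk x y),
      ∃ q : (G.restrictS S).Walk x y, q.length = p.length := by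
    intro x y hx p
    have hsupS : ∀ v ∈ p.support, v ∈ S := by
      intro v hv
      exact (hmemS v).mpr ⟨restrict_support p (hSsubW hx) v hv,
        ((hmemS x).mp hx).2.trans (support_reachable p v hv)⟩
    obtain ⟨q, hq⟩ := exists_restrict_walk p hsupS
    exact ⟨q.mapLe hmono, by simpa using hq⟩
  have hliftG : ∀ {x y : V}, x ∈ S → ∀ (p : G.Walk x y), (∀ v ∈ p.support, v ∈ W₀) →
      ∃ q : (G.restrictS S).Walk x y, q.length = p.length := by
    intro x y hx p hsup
    obtain ⟨q, hq⟩ := exists_restrict_walk p hsup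
    obtain ⟨r, hr⟩ := hliftW hx q
    exact ⟨r, by rw [hr, hq]⟩
  have hSclosed : ∀ {x y : V}, x ∈ S → (G.restrictS S).Walk x y → y ∈ S := by
    intro x y hx q
    exact (hmemS y).mpr ⟨hSsubW (restrict_support q hx y q.end_mem_support),
      ((hmemS x).mp hx).2.trans ((q.mapLe hmono2).reachable)⟩
  have hedistS_ne_top : ∀ x ∈ S, ∀ y ∈ S, (G.restrictS S).edist x y ≠ ⊤ := by
    intro x hx y hy
    obtain ⟨p⟩ := hreachW x hx y hy
    obtain ⟨q, _⟩ := hliftW hx p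
    exact SimpleGraph.edist_ne_top_iff_reachable.mpr q.reachable
  -- covering of S by VD ∩ S at (restricted) distance ≤ a
  have hcoverVD : ∀ q ∈ S, ∃ w, w ∈ VD ∧ w ∈ S ∧ (G.restrictS S).edist q w ≤ (a : ℕ∞) := by
    intro q hq
    obtain ⟨w, hwVD, hwd⟩ := (hmemW q).mp (hSsubW hq)
    have hne : G.edist q w ≠ ⊤ := (hwd.trans_lt (ENat.coe_lt_top a)).ne
    obtain ⟨p, hp⟩ := SimpleGraph.exists_walk_of_edist_ne_top hne
    have hL : (p.length : ℕ∞) ≤ (a : ℕ∞) := hp ▸ hwd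
    have hsup : ∀ v ∈ p.support, v ∈ W₀ := by
      intro v hv
      obtain ⟨i, rfl, hi⟩ := Walk.mem_support_iff_exists_getVert.mp hv
      refine (hmemW _).mpr ⟨w, hwVD, (edist_getVert_right p i).trans ?_⟩
      exact le_trans (by exact_mod_cast Nat.sub_le _ _) hL
    obtain ⟨q', hq'⟩ := hliftG hq p hsup
    refine ⟨w, hwVD, hSclosed hq q', ?_⟩
    calc (G.restrictS S).edist q w ≤ (q'.length : ℕ∞) := SimpleGraph.edist_le q'
    _ = (p.length : ℕ∞) := by exact_mod_cast hq'
    _ ≤ (a : ℕ∞) := hL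
  -- linking two VD vertices at G-distance ≤ 2a inside S
  have hVDlink : ∀ w t : V, w ∈ VD → t ∈ VD → w ∈ S → G.edist w t ≤ ((2*a : ℕ) : ℕ∞) →
      t ∈ S ∧ (G.restrictS S).edist w t ≤ ((2*a : ℕ) : ℕ∞) := by
    intro w t hwVD htVD hwS hdist
    have hne : G.edist w t ≠ ⊤ := (hdist.trans_lt (ENat.coe_lt_top _)).ne
    obtain ⟨p, hp⟩ := SimpleGraph.exists_walk_of_edist_ne_top hne
    have hL : p.length ≤ 2*a := by exact_mod_cast hp ▸ hdist
    have hsup : ∀ v ∈ p.support, v ∈ W₀ := by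
      intro v hv
      obtain ⟨i, rfl, hi⟩ := Walk.mem_support_iff_exists_getVert.mp hv
      by_cases hia : i ≤ a
      · refine (hmemW _).mpr ⟨w, hwVD, ?_⟩
        rw [SimpleGraph.edist_comm]
        exact (edist_getVert_left p i).trans (by exact_mod_cast hia)
      · refine (hmemW _).mpr ⟨t, htVD, (edist_getVert_right p i).trans ?_⟩
        rw [Nat.cast_le]
        omega
    obtain ⟨q', hq'⟩ := hliftG hwS p hsup
    refine ⟨hSclosed hwS q', ?_⟩
    calc (G.restrictS S).edist w t ≤ (q'.length : ℕ∞) := SimpleGraph.edist_le q'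
    _ = (p.length : ℕ∞) := by exact_mod_cast hq'
    _ ≤ ((2*a : ℕ) : ℕ∞) := by exact_mod_cast hL
  -- the packing set
  have hpack : packing G VD a S = sSup {n | ∃ T : Finset V, ↑T ⊆ S ∩ VD ∧ T.card = n ∧
      ∀ u ∈ T, ∀ v ∈ T, u ≠ v → ((2 * a : ℕ) : ℕ∞) < G.edist u v} := rfl
  set Pset := {n | ∃ T : Finset V, ↑T ⊆ S ∩ VD ∧ T.card = n ∧
      ∀ u ∈ T, ∀ v ∈ T, u ≠ v → ((2 * a : ℕ) : ℕ∞) < G.edist u v} with hPset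
  have hP0 : (0 : ℕ) ∈ Pset := ⟨∅, by simp, by simp, by simp⟩
  have hPbdd : BddAbove Pset := by
    refine ⟨Fintype.card V, fun k hk => ?_⟩
    obtain ⟨T, _, hcard, _⟩ := hk
    exact hcard ▸ T.card_le_univ
  have hnP : packing G VD a S ∈ Pset := by
    rw [hpack]; exact Nat.sSup_mem ⟨0, hP0⟩ hPbdd
  have hle_n' : ∀ k ∈ Pset, k ≤ packing G VD a S := fun k hk => by
    rw [hpack]; exact le_csSup hPbdd hk
  set n := packing G VD a S with hn_def
  obtain ⟨T, hTsub, hTcard, hTpair⟩ := hnP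
  have hle_n : ∀ k ∈ Pset, k ≤ n := hle_n'
  obtain ⟨w₀, hw₀VD, hw₀S, -⟩ := hcoverVD s₀ hs₀S
  have hn1 : 1 ≤ n := by
    refine hle_n 1 ⟨{w₀}, ?_, by simp, by simp⟩
    simp only [Finset.coe_singleton, Set.singleton_subset_iff]
    exact ⟨hw₀S, hw₀VD⟩
  -- maximality: every vertex of VD ∩ S is within G-distance 2a of T
  have hcoverT : ∀ w, w ∈ VD → w ∈ S → ∃ t ∈ T, G.edist w t ≤ ((2*a : ℕ) : ℕ∞) := by
    intro w hwVD hwS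
    by_contra hcon
    push_neg at hcon
    have hwT : w ∉ T := fun hmem => by simpa [SimpleGraph.edist_self] using hcon w hmem
    have hP' : n + 1 ∈ Pset := by
      refine ⟨insert w T, ?_, by rw [Finset.card_insert_of_notMem hwT, hTcard], ?_⟩
      · intro v hv
        rcases Finset.mem_insert.mp hv with rfl | hv
        · exact ⟨hwS, hwVD⟩
        · exact hTsub hv
      · intro u hu v hv huv
        rcases Finset.mem_insert.mp hu with hu' | hu'
        · rcases Finset.mem_insert.mp hv with hv' | hv'
          · exact absurd (hu'.trans hv'.symm) huv
          · subst hu'; exact hcon v hv'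
        · rcases Finset.mem_insert.mp hv with hv' | hv'
          · subst hv'; rw [SimpleGraph.edist_comm]; exact hcon u hu'
          · exact hTpair u hu' v hv' huv
    have := hle_n _ hP'
    omega
  -- covering of S by T at restricted distance ≤ 3a
  have hcov3 : ∀ q ∈ S, ∃ t ∈ T, (G.restrictS S).edist q t ≤ ((3*a : ℕ) : ℕ∞) := by
    intro q hq
    obtain ⟨w, hwVD, hwS, hwd⟩ := hcoverVD q hq
    obtain ⟨t, htT, htd⟩ := hcoverT w hwVD hwS
    have htVD : t ∈ VD := (hTsub htT).2
    obtain ⟨-, hlink⟩ := hVDlink w t hwVD htVD hwS htd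
    refine ⟨t, htT, ?_⟩
    calc (G.restrictS S).edist q t ≤ (G.restrictS S).edist q w + (G.restrictS S).edist w t :=
      SimpleGraph.edist_triangle
    _ ≤ (a : ℕ∞) + ((2*a : ℕ) : ℕ∞) := add_le_add hwd hlink
    _ = ((3*a : ℕ) : ℕ∞) := by push_cast; ring
  -- sampling along a shortest walk
  have hsample : ∀ x ∈ S, ∀ (y : V), ∀ (p : (G.restrictS S).Walk x y),
      (p.length : ℕ∞) = (G.restrictS S).edist x y → ∀ k : ℕ, k * (6*a+1) ≤ p.length →
      ∃ F : Finset V, F ⊆ T ∧ F.card = k + 1 ∧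
        ∀ t ∈ F, (G.restrictS S).edist x t ≤ ((k*(6*a+1) + 3*a : ℕ) : ℕ∞) := by
    intro x hx y p hp k hk
    have hsupS : ∀ v ∈ p.support, v ∈ S := restrict_support p hx
    have hmem : ∀ j : Fin (k+1), p.getVert ((j : ℕ) * (6*a+1)) ∈ S := by
      intro j
      refine hsupS _ (Walk.mem_support_iff_exists_getVert.mpr ⟨(j : ℕ) * (6*a+1), rfl, ?_⟩)
      exact le_trans (Nat.mul_le_mul_right _ (Nat.le_of_lt_succ j.isLt)) hk
    have hqch := fun j : Fin (k+1) => hcov3 (p.getVert ((j : ℕ) * (6*a+1))) (hmem j)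
    choose f hfT hfd using hqch
    have hqd : ∀ j : Fin (k+1),
        (G.restrictS S).edist x (p.getVert ((j : ℕ) * (6*a+1))) ≤ (((j : ℕ) * (6*a+1) : ℕ) : ℕ∞) :=
      fun j => edist_getVert_left p _
    have key : ∀ j j' : Fin (k+1), (j : ℕ) < (j' : ℕ) → f j ≠ f j' := by
      intro j j' hjj' heq
      have he1 : (G.restrictS S).edist (p.getVert ((j : ℕ) * (6*a+1)))
          (p.getVert ((j' : ℕ) * (6*a+1))) ≤ ((6*a : ℕ) : ℕ∞) := by
        calc (G.restrictS S).edist (p.getVert ((j : ℕ) * (6*a+1))) (p.getVert ((j' : ℕ) * (6*a+1)))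
            ≤ (G.restrictS S).edist (p.getVert ((j : ℕ) * (6*a+1))) (f j) +
              (G.restrictS S).edist (f j) (p.getVert ((j' : ℕ) * (6*a+1))) :=
          SimpleGraph.edist_triangle
        _ = (G.restrictS S).edist (p.getVert ((j : ℕ) * (6*a+1))) (f j) +
            (G.restrictS S).edist (p.getVert ((j' : ℕ) * (6*a+1))) (f j') := by
          rw [heq]; congr 1; exact SimpleGraph.edist_comm
        _ ≤ ((3*a : ℕ) : ℕ∞) + ((3*a : ℕ) : ℕ∞) := add_le_add (hfd j) (hfd j')
        _ = ((6*a : ℕ) : ℕ∞) := by push_cast; ring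
      have hlow : (p.length : ℕ∞) ≤ (((j : ℕ) * (6*a+1) : ℕ) : ℕ∞) + ((6*a : ℕ) : ℕ∞) +
          ((p.length - (j' : ℕ) * (6*a+1) : ℕ) : ℕ∞) := by
        rw [hp]
        calc (G.restrictS S).edist x y
            ≤ (G.restrictS S).edist x (p.getVert ((j' : ℕ) * (6*a+1))) +
              (G.restrictS S).edist (p.getVert ((j' : ℕ) * (6*a+1))) y :=
          SimpleGraph.edist_triangle
        _ ≤ ((G.restrictS S).edist x (p.getVert ((j : ℕ) * (6*a+1))) +
              (G.restrictS S).edist (p.getVert ((j : ℕ) * (6*a+1)))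
                (p.getVert ((j' : ℕ) * (6*a+1)))) +
            (G.restrictS S).edist (p.getVert ((j' : ℕ) * (6*a+1))) y :=
          add_le_add SimpleGraph.edist_triangle le_rfl
        _ ≤ _ := add_le_add (add_le_add (hqd j) he1) (edist_getVert_right p _)
      have hlow' : p.length ≤ (j : ℕ) * (6*a+1) + 6*a + (p.length - (j' : ℕ) * (6*a+1)) := by
        exact_mod_cast hlow
      have h1 : (j' : ℕ) * (6*a+1) ≤ p.length :=
        le_trans (Nat.mul_le_mul_right _ (Nat.le_of_lt_succ j'.isLt)) hk
      have h2 : (j : ℕ) * (6*a+1) + (6*a+1) ≤ (j' : ℕ) * (6*a+1) := by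
        have h3 : ((j : ℕ)+1) * (6*a+1) ≤ (j' : ℕ) * (6*a+1) :=
          Nat.mul_le_mul_right _ (Nat.succ_le_of_lt hjj')
        rw [Nat.succ_mul] at h3
        exact h3
      set A := (j : ℕ) * (6*a+1)
      set B := (j' : ℕ) * (6*a+1)
      omega
    have hinj : Function.Injective f := by
      intro j j' h
      by_contra hne
      rcases Nat.lt_or_ge (j : ℕ) (j' : ℕ) with hlt | hge
      · exact key j j' hlt h
      · have hlt' : (j' : ℕ) < (j : ℕ) :=
          lt_of_le_of_ne hge (fun hh => hne (Fin.ext hh.symm))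
        exact key j' j hlt' h.symm
    refine ⟨Finset.univ.image f, ?_, ?_, ?_⟩
    · intro t ht
      obtain ⟨j, _, rfl⟩ := Finset.mem_image.mp ht
      exact hfT j
    · rw [Finset.card_image_of_injective _ hinj, Finset.card_univ, Fintype.card_fin]
    · intro t ht
      obtain ⟨j, _, rfl⟩ := Finset.mem_image.mp ht
      calc (G.restrictS S).edist x (f j)
          ≤ (G.restrictS S).edist x (p.getVert ((j : ℕ) * (6*a+1))) +
            (G.restrictS S).edist (p.getVert ((j : ℕ) * (6*a+1))) (f j) :=
        SimpleGraph.edist_triangle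
      _ ≤ (((j : ℕ) * (6*a+1) : ℕ) : ℕ∞) + ((3*a : ℕ) : ℕ∞) := add_le_add (hqd j) (hfd j)
      _ ≤ ((k*(6*a+1) + 3*a : ℕ) : ℕ∞) := by
          rw [← Nat.cast_add, Nat.cast_le]
          exact Nat.add_le_add_right
            (Nat.mul_le_mul_right _ (Nat.le_of_lt_succ j.isLt)) _
  -- H2: diameter bound
  have hpairN : ∀ u ∈ S, ∀ v ∈ S,
      (G.restrictS S).edist u v ≤ ((10*a*n - (4*a+1) : ℕ) : ℕ∞) := by
    intro u hu v hv
    obtain ⟨p, hp⟩ := SimpleGraph.exists_walk_of_edist_ne_top (hedistS_ne_top u hu v hv)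
    rw [← hp, Nat.cast_le]
    refine Nat.le_sub_of_add_le ?_
    -- show p.length + (4a+1) ≤ 10*a*n
    rcases eq_or_lt_of_le hn1 with hn1' | hn2
    · -- n = 1
      have hb4 : (G.restrictS S).edist u v ≤ ((4*a : ℕ) : ℕ∞) := by
        obtain ⟨wu, hwuVD, hwuS, hwud⟩ := hcoverVD u hu
        obtain ⟨wv, hwvVD, hwvS, hwvd⟩ := hcoverVD v hv
        have hG : G.edist wu wv ≤ ((2*a : ℕ) : ℕ∞) := by
          by_contra hcon
          push_neg at hcon
          have hne : wu ≠ wv := by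
            rintro rfl
            simp [SimpleGraph.edist_self] at hcon
          have h2P : 2 ∈ Pset := by
            refine ⟨{wu, wv}, ?_, ?_, ?_⟩
            · intro z hz
              rcases Finset.mem_insert.mp hz with rfl | hz
              · exact ⟨hwuS, hwuVD⟩
              · rw [Finset.mem_singleton] at hz; subst hz; exact ⟨hwvS, hwvVD⟩
            · rw [Finset.card_insert_of_notMem (by simpa using hne), Finset.card_singleton]
            · intro z hz z' hz' hzz'
              simp only [Finset.mem_insert, Finset.mem_singleton] at hz hz'
              rcases hz with rfl | rfl <;> rcases hz' with rfl | rfl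
              · exact absurd rfl hzz'
              · exact hcon
              · rw [SimpleGraph.edist_comm]; exact hcon
              · exact absurd rfl hzz'
          have := hle_n 2 h2P
          omega
        obtain ⟨-, hlink⟩ := hVDlink wu wv hwuVD hwvVD hwuS hG
        calc (G.restrictS S).edist u v
            ≤ (G.restrictS S).edist u wv + (G.restrictS S).edist wv v :=
          SimpleGraph.edist_triangle
        _ ≤ ((G.restrictS S).edist u wu + (G.restrictS S).edist wu wv) +
            (G.restrictS S).edist wv v := add_le_add SimpleGraph.edist_triangle le_rfl
        _ ≤ ((a : ℕ∞) + ((2*a : ℕ) : ℕ∞)) + (a : ℕ∞) := by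
            refine add_le_add (add_le_add hwud hlink) ?_
            rw [SimpleGraph.edist_comm]; exact hwvd
        _ = ((4*a : ℕ) : ℕ∞) := by push_cast; ring
      have hL : p.length ≤ 4*a := by
        rw [← hp, Nat.cast_le] at hb4; exact hb4
      have heq10 : 10*a*n = 10*a := by rw [← hn1', Nat.mul_one]
      rw [heq10]
      omega
    · -- n ≥ 2
      have hstep : p.length + 1 ≤ (6*a+1) * n := by
        by_contra hcon
        push_neg at hcon
        have hk : n * (6*a+1) ≤ p.length := by
          rw [Nat.mul_comm]; omega
        obtain ⟨F, hFsub, hFcard, -⟩ := hsample u hu v p hp n hk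
        have hcc := Finset.card_le_card hFsub
        rw [hFcard, hTcard] at hcc
        omega
      have hexp : (6*a+1)*n = 6*a*n + n := by ring
      have k1 : n * 1 ≤ n * (2*a) := Nat.mul_le_mul (le_refl n) (by omega)
      have k2 : 2*a*2 ≤ 2*a*n := Nat.mul_le_mul (le_refl (2*a)) hn2
      nlinarith [hstep, k1, k2]
  have h4a : 4*a+1 ≤ 10*a*n := by
    have k3 : 10*a*1 ≤ 10*a*n := Nat.mul_le_mul (le_refl (10*a)) hn1
    nlinarith [k3]
  have hdiam : setDiam G S ≤ ((10*a*n - (4*a+1) : ℕ) : ℕ∞) := by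
    refine iSup₂_le fun u hu => iSup₂_le fun v hv => hpairN u hu v hv
  have H2 : setDiam G S + ((4 * a + 1 : ℕ) : ℕ∞) ≤ ((10 * a * n : ℕ) : ℕ∞) := by
    calc setDiam G S + ((4 * a + 1 : ℕ) : ℕ∞)
        ≤ ((10*a*n - (4*a+1) : ℕ) : ℕ∞) + ((4*a+1 : ℕ) : ℕ∞) := add_le_add hdiam le_rfl
    _ = ((10 * a * n : ℕ) : ℕ∞) := by
        rw [← Nat.cast_add, Nat.sub_add_cancel h4a]
  -- H3: packing bound
  have hedges_mem : ∀ (B : Finset V) (e : Sym2 V), e ∈ edgesIn G B →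
      ∃ x1 y1 : V, x1 ∈ B ∧ y1 ∈ B ∧ G.Adj x1 y1 ∧ e = s(x1, y1) := by
    intro B e he
    obtain ⟨⟨x1, y1⟩, hmem, hee⟩ := Finset.mem_image.mp he
    obtain ⟨hprod, hadj⟩ := Finset.mem_filter.mp hmem
    obtain ⟨h1, h2⟩ := Finset.mem_product.mp hprod
    exact ⟨x1, y1, h1, h2, hadj, hee.symm⟩
  have hedges_sub : ∀ (B B' : Finset V), B ⊆ B' → edgesIn G B ⊆ edgesIn G B' := by
    intro B B' hBB e he
    obtain ⟨x1, y1, h1, h2, hadj, rfl⟩ := hedges_mem B e he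
    exact Finset.mem_image.mpr ⟨(x1, y1),
      Finset.mem_filter.mpr ⟨Finset.mem_product.mpr ⟨hBB h1, hBB h2⟩, hadj⟩, rfl⟩
  have H3 : n ≤ 2*b := by
    by_contra hcon
    push_neg at hcon
    have hTne : T.Nonempty := Finset.card_pos.mp (by omega)
    obtain ⟨v₀, hv₀T⟩ := hTne
    have hv₀S : v₀ ∈ S := (hTsub hv₀T).1
    have hF : ∃ F : Finset V, F ⊆ T ∧ 2*b+1 ≤ F.card ∧
        ∀ t ∈ F, (G.restrictS S).edist v₀ t ≤ ((2*b*(6*a+1) + 3*a : ℕ) : ℕ∞) := by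
      by_cases hall : ∀ t ∈ T, (G.restrictS S).edist v₀ t ≤ ((2*b*(6*a+1) : ℕ) : ℕ∞)
      · refine ⟨T, le_refl _, by omega, fun t ht => (hall t ht).trans ?_⟩
        rw [Nat.cast_le]; omega
      · push_neg at hall
        obtain ⟨t₁, ht₁T, ht₁⟩ := hall
        have ht₁S : t₁ ∈ S := (hTsub ht₁T).1
        obtain ⟨p, hp⟩ :=
          SimpleGraph.exists_walk_of_edist_ne_top (hedistS_ne_top v₀ hv₀S t₁ ht₁S)
        have hk : (2*b) * (6*a+1) ≤ p.length := by
          rw [← hp] at ht₁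
          have := ht₁.le
          rw [Nat.cast_le] at this
          exact this
        obtain ⟨F, hFsub, hFcard, hFd⟩ := hsample v₀ hv₀S t₁ p hp (2*b) hk
        exact ⟨F, hFsub, by omega, fun t ht => hFd t ht⟩
    obtain ⟨F, hFsub, hFcard, hFd⟩ := hF
    have hed : ∀ t ∈ F, ∀ t' ∈ F, G.edist t t' ≤ ((2*(2*b*(6*a+1) + 3*a) : ℕ) : ℕ∞) := by
      intro t ht t' ht'
      calc G.edist t t' ≤ G.edist t v₀ + G.edist v₀ t' := SimpleGraph.edist_triangle
      _ ≤ (G.restrictS S).edist t v₀ + (G.restrictS S).edist v₀ t' :=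
        add_le_add (edist_le_restrict G S t v₀) (edist_le_restrict G S v₀ t')
      _ = (G.restrictS S).edist v₀ t + (G.restrictS S).edist v₀ t' := by
        congr 1; exact SimpleGraph.edist_comm
      _ ≤ ((2*b*(6*a+1) + 3*a : ℕ) : ℕ∞) + ((2*b*(6*a+1) + 3*a : ℕ) : ℕ∞) :=
        add_le_add (hFd t ht) (hFd t' ht')
      _ = ((2*(2*b*(6*a+1) + 3*a) : ℕ) : ℕ∞) := by push_cast; ring
    obtain ⟨w, hwF, hwmin⟩ := F.exists_min_image (fun t => (edgesIn G (ball t a)).card)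
      (Finset.card_pos.mp (by omega))
    have hwVD : w ∈ VD := (hTsub (hFsub hwF)).2
    have hwS : w ∈ S := (hTsub (hFsub hwF)).1
    set m := (edgesIn G (ball w a)).card with hm
    have hm1 : 1 ≤ m := by
      obtain ⟨t, htF, htne⟩ := Finset.exists_mem_ne (show 1 < F.card by omega) w
      have htS : t ∈ S := (hTsub (hFsub htF)).1
      obtain ⟨p0⟩ := hreachW w hwS t htS
      have hnil : ¬ p0.Nil := Walk.not_nil_of_ne (htne.symm)
      have hadj : (G.restrictS W₀).Adj w (p0.getVert 1) := p0.adj_snd hnil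
      have hGadj : G.Adj w (p0.getVert 1) := hadj.2.2
      have hedge : s(w, p0.getVert 1) ∈ edgesIn G (ball w a) := by
        refine Finset.mem_image.mpr ⟨(w, p0.getVert 1),
          Finset.mem_filter.mpr ⟨Finset.mem_product.mpr ⟨?_, ?_⟩, hGadj⟩, rfl⟩
        · exact (hball w a w).mpr (by rw [SimpleGraph.edist_self]; exact zero_le)
        · refine (hball w a _).mpr ?_
          rw [SimpleGraph.edist_eq_one_iff_adj.mpr hGadj]
          exact_mod_cast ha
      exact Finset.card_pos.mpr ⟨_, hedge⟩
    have hdisj : ∀ t ∈ F, ∀ t' ∈ F, t ≠ t' →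
        Disjoint (edgesIn G (ball t a)) (edgesIn G (ball t' a)) := by
      intro t ht t' ht' hne
      rw [Finset.disjoint_left]
      intro e he he'
      obtain ⟨x1, y1, h1, h2, hadj1, rfl⟩ := hedges_mem _ e he
      obtain ⟨x2, y2, h3, h4, hadj2, heq2⟩ := hedges_mem _ _ he'
      have hcommon : x1 ∈ ball t' a := by
        rcases Sym2.eq_iff.mp heq2 with ⟨h5, h6⟩ | ⟨h5, h6⟩
        · rw [h5]; exact h3
        · rw [h5]; exact h4
      have hdd : G.edist t t' ≤ ((2*a : ℕ) : ℕ∞) := by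
        calc G.edist t t' ≤ G.edist t x1 + G.edist x1 t' := SimpleGraph.edist_triangle
        _ = G.edist t x1 + G.edist t' x1 := by congr 1; exact SimpleGraph.edist_comm
        _ ≤ (a : ℕ∞) + (a : ℕ∞) := add_le_add ((hball t a x1).mp h1) ((hball t' a x1).mp hcommon)
        _ = ((2*a : ℕ) : ℕ∞) := by push_cast; ring
      exact absurd hdd (not_le.mpr (hTpair t (hFsub ht) t' (hFsub ht') hne))
    have hsum : (2*b+1) * m ≤ (F.biUnion (fun t => edgesIn G (ball t a))).card := by
      rw [Finset.card_biUnion hdisj]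
      calc (2*b+1)*m ≤ F.card * m := Nat.mul_le_mul_right _ hFcard
      _ ≤ ∑ t ∈ F, (edgesIn G (ball t a)).card := by
        have hch := Finset.card_nsmul_le_sum F (fun t => (edgesIn G (ball t a)).card) m
          (fun t ht => hwmin t ht)
        simpa [smul_eq_mul, Nat.mul_comm] using hch
    have hsub100 : F.biUnion (fun t => edgesIn G (ball t a)) ⊆ edgesIn G (ball w (100*a*b)) := by
      refine Finset.biUnion_subset.mpr fun t ht => ?_
      refine hedges_sub _ _ ?_
      intro x hx
      refine (hball _ _ _).mpr ?_
      calc G.edist w x ≤ G.edist w t + G.edist t x := SimpleGraph.edist_triangle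
      _ ≤ ((2*(2*b*(6*a+1) + 3*a) : ℕ) : ℕ∞) + (a : ℕ∞) :=
        add_le_add (hed w hwF t ht) ((hball t a x).mp hx)
      _ ≤ ((100*a*b : ℕ) : ℕ∞) := by
          rw [← Nat.cast_add, Nat.cast_le]
          have e1 : 4*b ≤ 4*a*b := Nat.mul_le_mul (by omega) (le_refl b)
          have e2 : 7*a*1 ≤ 7*a*b := Nat.mul_le_mul (le_refl (7*a)) hb
          nlinarith [e1, e2]
    have hfin := (hsum.trans (Finset.card_le_card hsub100)).trans (hVD w hwVD)
    rw [← hm] at hfin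
    have hexp2 : (2*b+1)*m = 2*b*m + m := by ring
    omega
  exact ⟨H1, H2, H3⟩
end

section
/- Let G be a finite simple graph with vertex set V, let a ≥ 1 and d₁, d₂ ≥ 0 be integers with d₁ ≤ a, and let V = V_D ⊔ V_S be a partition such that (i) any two distinct connected components of G[V_D] are at G-distance greater than a, and (ii) every connected component K of G[V_D] has diameter at most d₂ in G[K]. Let 𝒫 be a partition of V into clusters such that for every cluster P ∈ 𝒫 the induced subgraph G[P] is connected with diameter at most d₁. Let H be the spanning subgraph of G consisting of all edges with both endpoints in the same cluster together with all edges {u,v} whose endpoints lie in different clusters but satisfy u, v ∈ V_D. Then every connected component U of H is a union of clusters, contains the vertex set of at most one connected component of G[V_D], and the induced subgraph G[U] has diameter at most 2(d₁+1) + d₂. -/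
open Finset

lemma restrictS_le' {V : Type*} (G : SimpleGraph V) (S : Set V) : G.restrictS S ≤ G :=
  fun _ _ h => h.2.2

lemma restrictS_le_restrictS' {V : Type*} (G : SimpleGraph V) {S T : Set V} (h : S ⊆ T) :
    G.restrictS S ≤ G.restrictS T :=
  fun _ _ ⟨ha, hb, hadj⟩ => ⟨h ha, h hb, hadj⟩

/-- Transfer a walk in `G.restrictS VD` starting in `U` to a walk in `G.restrictS U`
of the same length, provided `U` is closed under `H`-adjacency and `VD`-`VD` `G`-edges
are `H`-edges. -/
lemma restrict_walk_transfer' {V : Type*} {G H : SimpleGraph V} {VD U : Set V}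
    (hcl : ∀ a b, a ∈ U → H.Adj a b → b ∈ U)
    (hVD : ∀ a b, a ∈ VD → b ∈ VD → G.Adj a b → H.Adj a b) :
    ∀ {x y : V}, (w : (G.restrictS VD).Walk x y) → x ∈ U →
      ∃ w' : (G.restrictS U).Walk x y, w'.length = w.length := by
  intro x y w
  induction w with
  | nil => exact fun _ => ⟨SimpleGraph.Walk.nil, rfl⟩
  | @cons x x' y h w ih =>
    intro hxU
    obtain ⟨hx, hx', hadj⟩ := h
    have hx'U : x' ∈ U := hcl x x' hxU (hVD x x' hx hx' hadj)
    obtain ⟨w', hw'⟩ := ih hx'U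
    exact ⟨SimpleGraph.Walk.cons ⟨hxU, hx'U, hadj⟩ w', congrArg (· + 1) hw'⟩

/-- Along any `H`-walk ending in `V_D`, every `V_D` vertex (and every cluster) can reach
the endpoint within `G[V_D]`. -/
lemma walk_VD_invariant' {V : Type*} [Fintype V] [DecidableEq V] (G : SimpleGraph V)
    (a d₁ : ℕ) (hd₁a : d₁ ≤ a) (VD : Set V)
    (hfar : ∀ u ∈ VD, ∀ v ∈ VD, ¬(G.restrictS VD).Reachable u v →
      ((a : ℕ∞) < G.edist u v))
    (P : Finpartition (Finset.univ : Finset V))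
    (hclusdiam : ∀ p ∈ P.parts, ∀ u ∈ p, ∀ v ∈ p,
      (G.restrictS (↑p : Set V)).edist u v ≤ (d₁ : ℕ∞))
    (H : SimpleGraph V)
    (hH : ∀ u v, H.Adj u v ↔
      (G.Adj u v ∧ ((∃ p ∈ P.parts, u ∈ p ∧ v ∈ p) ∨ (u ∈ VD ∧ v ∈ VD))))
    {u v : V} (w : H.Walk u v) : v ∈ VD →
    (u ∈ VD → (G.restrictS VD).Reachable u v) ∧
    (∀ p ∈ P.parts, u ∈ p → ∃ x ∈ p, x ∈ VD ∧ (G.restrictS VD).Reachable x v) := by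
  have hreach : ∀ u ∈ VD, ∀ x ∈ VD, G.edist u x ≤ (a : ℕ∞) →
      (G.restrictS VD).Reachable u x := by
    intro u hu x hx hle
    by_contra hr
    exact absurd (hfar u hu x hx hr) (not_lt.2 hle)
  have hclose : ∀ p ∈ P.parts, ∀ u ∈ VD, ∀ x ∈ VD, u ∈ p → x ∈ p →
      (G.restrictS VD).Reachable u x := by
    intro p hp u hu x hx hup hxp
    refine hreach u hu x hx ?_
    calc G.edist u x ≤ (G.restrictS (↑p : Set V)).edist u x :=
          SimpleGraph.edist_anti (restrictS_le' G _)
      _ ≤ (d₁ : ℕ∞) := hclusdiam p hp u hup x hxp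
      _ ≤ (a : ℕ∞) := by exact_mod_cast hd₁a
  induction w with
  | @nil z =>
    intro hz
    refine ⟨fun _ => SimpleGraph.Reachable.refl _, ?_⟩
    intro p _ hzp
    exact ⟨z, hzp, hz, SimpleGraph.Reachable.refl _⟩
  | @cons u u' v h w ih =>
    intro hv
    obtain ⟨hGadj, hcase⟩ := (hH u u').1 h
    obtain ⟨ih1, ih2⟩ := ih hv
    have hadjVD : (u ∈ VD → u' ∈ VD → (G.restrictS VD).Adj u u') :=
      fun h1 h2 => ⟨h1, h2, hGadj⟩
    constructor
    · intro huVD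
      rcases hcase with ⟨p, hp, hup, hu'p⟩ | ⟨huVD', hu'VD⟩
      · obtain ⟨x, hxp, hxVD, hxr⟩ := ih2 p hp hu'p
        exact (hclose p hp u huVD x hxVD hup hxp).trans hxr
      · exact ((hadjVD huVD hu'VD).reachable).trans (ih1 hu'VD)
    · intro q hq huq
      rcases hcase with ⟨p, hp, hup, hu'p⟩ | ⟨huVD', hu'VD⟩
      · have : q = p := P.eq_of_mem_parts hq hp huq hup
        subst this
        obtain ⟨x, hxp, hxVD, hxr⟩ := ih2 q hq hu'p
        exact ⟨x, hxp, hxVD, hxr⟩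
      · refine ⟨u, huq, huVD', ?_⟩
        exact ((hadjVD huVD' hu'VD).reachable).trans (ih1 hu'VD)

/-- If an `H`-walk leaves the cluster `p`, then `p` contains a `V_D` vertex. -/
lemma exists_VD_of_walk_leaves' {V : Type*} [Fintype V] [DecidableEq V] (G : SimpleGraph V)
    (VD : Set V) (P : Finpartition (Finset.univ : Finset V)) (H : SimpleGraph V)
    (hH : ∀ u v, H.Adj u v ↔
      (G.Adj u v ∧ ((∃ p ∈ P.parts, u ∈ p ∧ v ∈ p) ∨ (u ∈ VD ∧ v ∈ VD)))) :
    ∀ {u v : V}, H.Walk u v → ∀ p ∈ P.parts, u ∈ p → v ∉ p → ∃ x ∈ p, x ∈ VD := by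
  intro u v w
  induction w with
  | nil => exact fun p _ hup hvp => absurd hup hvp
  | @cons u u' v h w ih =>
    intro p hp hup hvp
    by_cases hu'p : u' ∈ p
    · exact ih p hp hu'p hvp
    · obtain ⟨_, hcase⟩ := (hH u u').1 h
      rcases hcase with ⟨p', hp', hup', hu'p'⟩ | ⟨huVD, _⟩
      · exact absurd (P.eq_of_mem_parts hp' hp hup' hup ▸ hu'p') hu'p
      · exact ⟨u, hup, huVD⟩

/-- diameter claim in Lemma B.3, analysis of LowDiamDecomposition.
Let `a ≥ 1` and `d₁ ≤ a`, `d₂ ≥ 0`, and let `V = V_D ⊔ V_S` be a partition such that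
(i) distinct connected components of `G[V_D]` are at `G`-distance greater than `a`, and
(ii) every connected component of `G[V_D]` has diameter at most `d₂`. Let `𝒫` be a partition
of `V` into clusters, each inducing a connected subgraph of diameter at most `d₁`. Let `H`
consist of all edges of `G` inside a cluster together with all inter-cluster edges with both
endpoints in `V_D`. Then every connected component `U` of `H` is a union of clusters,
contains the vertex set of at most one connected component of `G[V_D]`, and `G[U]` has
diameter at most `2(d₁+1) + d₂`. -/
theorem low_diam_decomposition_component_diameter
    {V : Type*} [Fintype V] [DecidableEq V] (G : SimpleGraph V)
    (a d₁ d₂ : ℕ) (ha : 1 ≤ a) (hd₁a : d₁ ≤ a)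
    (VD VS : Set V) (hunion : VD ∪ VS = Set.univ) (hdisj : Disjoint VD VS)
    (hfar : ∀ u ∈ VD, ∀ v ∈ VD, ¬(G.restrictS VD).Reachable u v →
      ((a : ℕ∞) < G.edist u v))
    (hcompdiam : ∀ u ∈ VD, ∀ v ∈ VD, (G.restrictS VD).Reachable u v →
      (G.restrictS VD).edist u v ≤ (d₂ : ℕ∞))
    (P : Finpartition (Finset.univ : Finset V))
    (hclusdiam : ∀ p ∈ P.parts, ∀ u ∈ p, ∀ v ∈ p,
      (G.restrictS (↑p : Set V)).edist u v ≤ (d₁ : ℕ∞))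
    (H : SimpleGraph V)
    (hH : ∀ u v, H.Adj u v ↔
      (G.Adj u v ∧ ((∃ p ∈ P.parts, u ∈ p ∧ v ∈ p) ∨ (u ∈ VD ∧ v ∈ VD))))
    (u₀ : V) (U : Set V) (hU : U = {v | H.Reachable u₀ v}) :
    (∀ p ∈ P.parts, (∃ x ∈ p, x ∈ U) → (↑p : Set V) ⊆ U) ∧
    (∀ u ∈ U ∩ VD, ∀ v ∈ U ∩ VD, (G.restrictS VD).Reachable u v) ∧
    (∀ u ∈ U, ∀ v ∈ U,
      (G.restrictS U).edist u v ≤ ((2 * (d₁ + 1) + d₂ : ℕ) : ℕ∞)) := by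
  subst hU
  -- cluster-restricted graph is a subgraph of H
  have hpH : ∀ p ∈ P.parts, G.restrictS (↑p : Set V) ≤ H := by
    intro p hp x y ⟨hx, hy, hadj⟩
    exact (hH x y).2 ⟨hadj, Or.inl ⟨p, hp, by exact_mod_cast hx, by exact_mod_cast hy⟩⟩
  have hVDH : ∀ x y, x ∈ VD → y ∈ VD → G.Adj x y → H.Adj x y := by
    intro x y hx hy hadj
    exact (hH x y).2 ⟨hadj, Or.inr ⟨hx, hy⟩⟩
  set U : Set V := {v | H.Reachable u₀ v} with hUdef
  have hcl : ∀ x y, x ∈ U → H.Adj x y → y ∈ U :=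
    fun x y hx h => hx.trans h.reachable
  -- Claim 1 : clusters meeting U are contained in U
  have claim1 : ∀ p ∈ P.parts, (∃ x ∈ p, x ∈ U) → (↑p : Set V) ⊆ U := by
    intro p hp ⟨x, hxp, hxU⟩ v hv
    have hv' : v ∈ p := by exact_mod_cast hv
    have hd : (G.restrictS (↑p : Set V)).edist x v ≤ (d₁ : ℕ∞) :=
      hclusdiam p hp x hxp v hv'
    have hne : (G.restrictS (↑p : Set V)).edist x v ≠ ⊤ :=
      (hd.trans_lt (ENat.coe_lt_top d₁)).ne
    have hr : (G.restrictS (↑p : Set V)).Reachable x v :=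
      SimpleGraph.reachable_of_edist_ne_top hne
    exact hxU.trans (hr.mono (hpH p hp))
  -- Claim 2 : VD vertices of U lie in one component of G[VD]
  have claim2 : ∀ u ∈ U ∩ VD, ∀ v ∈ U ∩ VD, (G.restrictS VD).Reachable u v := by
    intro u ⟨huU, huVD⟩ v ⟨hvU, hvVD⟩
    obtain ⟨w⟩ := huU.symm.trans hvU
    exact (walk_VD_invariant' G a d₁ hd₁a VD hfar P hclusdiam H hH w hvVD).1 huVD
  refine ⟨claim1, claim2, ?_⟩
  -- Claim 3 : diameter bound
  intro u huU v hvU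
  obtain ⟨p, hp, hup⟩ := P.exists_mem (Finset.mem_univ u)
  obtain ⟨q, hq, hvq⟩ := P.exists_mem (Finset.mem_univ v)
  have hpU : (↑p : Set V) ⊆ U := claim1 p hp ⟨u, hup, huU⟩
  have hqU : (↑q : Set V) ⊆ U := claim1 q hq ⟨v, hvq, hvU⟩
  have hmono_p : (G.restrictS U).edist u v ≤ (G.restrictS (↑p : Set V)).edist u v :=
    SimpleGraph.edist_anti (restrictS_le_restrictS' G hpU)
  have hfin : ((2 * (d₁ + 1) + d₂ : ℕ) : ℕ∞) = ((d₁ : ℕ∞) + (d₂ : ℕ∞)) + (d₁ : ℕ∞) + 2 := by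
    push_cast
    ring
  by_cases hpq : p = q
  · subst hpq
    have := (hmono_p.trans (hclusdiam p hp u hup v (by exact_mod_cast hvq)))
    refine this.trans ?_
    exact Nat.cast_le.mpr (by omega)
  · -- v is not in p, u is not in q
    have hvnp : v ∉ p := fun hvp => hpq (P.eq_of_mem_parts hp hq hvp hvq)
    have hunq : u ∉ q := fun huq => hpq (P.eq_of_mem_parts hq hp huq hup).symm
    obtain ⟨w⟩ := huU.symm.trans hvU
    obtain ⟨x, hxp, hxVD⟩ := exists_VD_of_walk_leaves' G VD P H hH w p hp hup hvnp
    obtain ⟨w'⟩ := (huU.symm.trans hvU).symm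
    obtain ⟨y, hyq, hyVD⟩ := exists_VD_of_walk_leaves' G VD P H hH w' q hq hvq hunq
    have hxU : x ∈ U := hpU (by exact_mod_cast hxp)
    have hyU : y ∈ U := hqU (by exact_mod_cast hyq)
    have hrxy : (G.restrictS VD).Reachable x y := claim2 x ⟨hxU, hxVD⟩ y ⟨hyU, hyVD⟩
    have hdxy : (G.restrictS VD).edist x y ≤ (d₂ : ℕ∞) := hcompdiam x hxVD y hyVD hrxy
    obtain ⟨wxy, hwxy⟩ := hrxy.exists_walk_length_eq_edist
    obtain ⟨wxy', hwxy'⟩ := restrict_walk_transfer' hcl hVDH wxy hxU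
    have hUxy : (G.restrictS U).edist x y ≤ (d₂ : ℕ∞) := by
      calc (G.restrictS U).edist x y ≤ (wxy'.length : ℕ∞) := SimpleGraph.edist_le _
        _ = (wxy.length : ℕ∞) := by rw [hwxy']
        _ = (G.restrictS VD).edist x y := by exact_mod_cast hwxy
        _ ≤ (d₂ : ℕ∞) := hdxy
    have hUux : (G.restrictS U).edist u x ≤ (d₁ : ℕ∞) := by
      calc (G.restrictS U).edist u x ≤ (G.restrictS (↑p : Set V)).edist u x :=
            SimpleGraph.edist_anti (restrictS_le_restrictS' G hpU)
        _ ≤ (d₁ : ℕ∞) := hclusdiam p hp u hup x hxp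
    have hUyv : (G.restrictS U).edist y v ≤ (d₁ : ℕ∞) := by
      calc (G.restrictS U).edist y v ≤ (G.restrictS (↑q : Set V)).edist y v :=
            SimpleGraph.edist_anti (restrictS_le_restrictS' G hqU)
        _ ≤ (d₁ : ℕ∞) := hclusdiam q hq y hyq v hvq
    calc (G.restrictS U).edist u v
        ≤ (G.restrictS U).edist u x + (G.restrictS U).edist x v :=
          SimpleGraph.edist_triangle
      _ ≤ (G.restrictS U).edist u x +
            ((G.restrictS U).edist x y + (G.restrictS U).edist y v) :=
          add_le_add (le_refl _) SimpleGraph.edist_triangle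
      _ ≤ (d₁ : ℕ∞) + ((d₂ : ℕ∞) + (d₁ : ℕ∞)) :=
          add_le_add hUux (add_le_add hUxy hUyv)
      _ = ((d₁ + (d₂ + d₁) : ℕ) : ℕ∞) := by push_cast; ring
      _ ≤ ((2 * (d₁ + 1) + d₂ : ℕ) : ℕ∞) := Nat.cast_le.2 (by omega)
end
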